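/- If the primal solution set psol(A,B) = {x} is a singleton, then the dual solution set dsol(A,B) equals Ax ∩ (−Bx). -/
import Mathlib


open Pointwise InnerProductSpace

variable {X : Type*} [NormedAddCommGroup X] [InnerProductSpace ℝ X]

/-- A set-valued operator `A : X ⇉ X` is monotone. -/
def SVMonotone (A : X → Set X) : Prop :=
  ∀ ⦃x y u v : X⦄, u ∈ A x → v ∈ A y → 0 ≤ ⟪x - y, u - v⟫_ℝ

/-- A set-valued operator is maximally monotone. -/
def SVMaxMonotone (A : X → Set X) : Prop :=
  SVMonotone A ∧ ∀ x u : X, (∀ y v, v ∈ A y → 0 ≤ ⟪x - y, u - v⟫_ℝ) → u ∈ A x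

/-- Set-valued inverse. -/
def SVInv (A : X → Set X) : X → Set X := fun u => {x | u ∈ A x}

/-- `B^∨ = (−Id) ∘ B ∘ (−Id)`. -/
def SVVee (B : X → Set X) : X → Set X := fun x => -(B (-x))

/-- `B^{−∨} = (B⁻¹)^∨`. -/
def SVInvVee (B : X → Set X) : X → Set X := SVVee (SVInv B)

/-- Primal Attouch–Théra solutions: `zer (A + B)`. -/
def psol (A B : X → Set X) : Set X := {x | (0 : X) ∈ A x + B x}

/-- Dual Attouch–Théra solutions: `zer (A⁻¹ + B^{−∨})`. -/
def dsol (A B : X → Set X) : Set X := {y | (0 : X) ∈ SVInv A y + SVInvVee B y}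

/-- If `psol (A, B) = {x}` then `dsol (A, B) = Ax ∩ (−Bx)`. -/
theorem dsol_eq_of_psol_singleton (A B : X → Set X)
    (hA : SVMaxMonotone A) (hB : SVMaxMonotone B) (x : X)
    (hx : psol A B = {x}) :
    dsol A B = A x ∩ (-(B x)) := by
  ext y
  constructor
  · rintro hy
    obtain ⟨a, ha, b, hb, hab⟩ := hy
    have hb' : -y ∈ B (-b) := by
      simpa [SVInvVee, SVVee, SVInv, Set.mem_neg] using hb
    have hba : -b = a := neg_eq_of_add_eq_zero_left hab
    rw [hba] at hb'
    have haps : a ∈ psol A B := ⟨y, ha, -y, hb', add_neg_cancel y⟩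
    have hax : a = x := by
      have := hx ▸ haps
      simpa using this
    subst hax
    exact ⟨ha, by simpa [Set.mem_neg] using hb'⟩
  · rintro ⟨h1, h2⟩
    refine ⟨x, h1, -x, ?_, add_neg_cancel x⟩
    simp only [SVInvVee, SVVee, SVInv, Set.mem_neg, neg_neg, Set.mem_setOf_eq]
    simpa [Set.mem_neg] using h2
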